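/- arXiv:2005.06947 — 2 statements merged into one kernel-verified Lean document; each statement's English description precedes it below -/
import Mathlib

section
/- For every integer q, if there exists an MDS code of length n and dimension 2 over an alphabet of size q, then the graph G_q contains a clique of size n; consequently χ(G_q) ≥ n(q,2), where n(q,2) is the maximal such length. -/
/-- A vector over [q] indexed by the q² messages of [q]² is balanced if each symbol of [q]
appears exactly q times. -/
def BalancedVec (q : ℕ) (u : (Fin 2 → Fin q) → Fin q) : Prop :=
  ∀ j : Fin q, (Finset.univ.filter fun m => u m = j).card = q

/-- The graph G_q: vertices are the balanced vectors in [q]^{q²} (coordinates indexed by the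
q² elements of [q]²), with u ~ v iff the pairs (u_i, v_i) exhaust all of [q]×[q]. -/
def Gq (q : ℕ) : SimpleGraph {u : (Fin 2 → Fin q) → Fin q // BalancedVec q u} where
  Adj u v := u ≠ v ∧ Function.Surjective (fun m : Fin 2 → Fin q => (u.val m, v.val m))
  symm := by
    constructor
    rintro u v ⟨hne, hs⟩
    refine ⟨hne.symm, fun p => ?_⟩
    obtain ⟨m, hm⟩ := hs (p.2, p.1)
    rw [Prod.ext_iff] at hm
    exact ⟨m, by rw [Prod.ext_iff]; exact ⟨hm.2, hm.1⟩⟩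
  loopless := by constructor; rintro u ⟨hne, _⟩; exact hne rfl

lemma pairBij {q : ℕ} (f : (Fin 2 → Fin q) → Fin q × Fin q)
    (hf : Function.Injective f) : Function.Bijective f := by
  rw [Fintype.bijective_iff_injective_and_card]
  refine ⟨hf, ?_⟩
  simp only [Fintype.card_fun, Fintype.card_fin, Fintype.card_prod]
  ring

lemma balanced_fst {q : ℕ} (f : (Fin 2 → Fin q) → Fin q × Fin q)
    (hf : Function.Bijective f) : BalancedVec q (fun m => (f m).1) := by
  intro j
  classical
  have h1 : (Finset.univ.filter fun m => (f m).1 = j).card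
      = (Finset.univ.filter fun p : Fin q × Fin q => p.1 = j).card := by
    apply Finset.card_bij (fun m _ => f m)
    · intro m hm; simp_all
    · intro a _ b _ h; exact hf.1 h
    · intro p hp
      obtain ⟨m, rfl⟩ := hf.2 p
      exact ⟨m, by simp_all, rfl⟩
  rw [h1]
  have h2 : (Finset.univ.filter fun p : Fin q × Fin q => p.1 = j)
      = {j} ×ˢ Finset.univ := by
    ext p
    simp only [Finset.mem_filter, Finset.mem_univ, true_and, Finset.mem_product,
      Finset.mem_singleton]
    tauto
  rw [h2, Finset.card_product]
  simp

lemma clique_conseq {q n : ℕ} (s : Finset {u : (Fin 2 → Fin q) → Fin q // BalancedVec q u})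
    (hcl : (Gq q).IsNClique n s) :
    (∃ s : Finset {u : (Fin 2 → Fin q) → Fin q // BalancedVec q u},
      (Gq q).IsNClique n s) ∧
    (n : ℕ∞) ≤ (Gq q).chromaticNumber := by
  refine ⟨⟨s, hcl⟩, ?_⟩
  have := hcl.1.card_le_chromaticNumber
  rwa [hcl.2] at this


/-- If there is an (n,2) MDS code over an alphabet of size q (here q ≥ 2), then
G_q contains a clique of size n; consequently χ(G_q) ≥ n. -/
theorem stmt9 (q n : ℕ) (hq : 2 ≤ q)
    (C : (Fin 2 → Fin q) → Fin n → Fin q)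
    (hC : ∀ i j : Fin n, i ≠ j →
      Function.Injective (fun m : Fin 2 → Fin q => (C m i, C m j))) :
    (∃ s : Finset {u : (Fin 2 → Fin q) → Fin q // BalancedVec q u},
      (Gq q).IsNClique n s) ∧
    (n : ℕ∞) ≤ (Gq q).chromaticNumber := by
  classical
  rcases Nat.lt_or_ge n 2 with hn | hn
  · interval_cases n
    · exact clique_conseq ∅ ⟨by simp, by simp⟩
    · have hbal : BalancedVec q (fun m : Fin 2 → Fin q => m 0) :=
        balanced_fst (fun m => (m 0, m 1)) (piFinTwoEquiv fun _ => Fin q).bijective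
      exact clique_conseq {⟨_, hbal⟩} ⟨by simp, by simp⟩
  · have hbij : ∀ i j : Fin n, i ≠ j →
        Function.Bijective (fun m : Fin 2 → Fin q => (C m i, C m j)) :=
      fun i j h => pairBij _ (hC i j h)
    have hbal : ∀ i : Fin n, BalancedVec q (fun m => C m i) := by
      intro i
      obtain ⟨j, hj⟩ : ∃ j : Fin n, j ≠ i :=
        Fintype.exists_ne_of_one_lt_card (by rw [Fintype.card_fin]; omega) i
      exact balanced_fst (fun m => (C m i, C m j)) (hbij i j (Ne.symm hj))
    set v : Fin n → {u : (Fin 2 → Fin q) → Fin q // BalancedVec q u} :=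
      fun i => ⟨fun m => C m i, hbal i⟩ with hv
    have hadj : ∀ i j : Fin n, i ≠ j → (Gq q).Adj (v i) (v j) := by
      intro i j hij
      refine ⟨?_, (hbij i j hij).2⟩
      intro h
      have hval : ∀ m, C m i = C m j := fun m => congrFun (congrArg Subtype.val h) m
      obtain ⟨m, hm⟩ := (hbij i j hij).2 (⟨0, by omega⟩, ⟨1, by omega⟩)
      rw [Prod.ext_iff] at hm
      simp only at hm
      exact absurd (hval m) (by rw [hm.1, hm.2]; simp [Fin.ext_iff])
    have hvinj : Function.Injective v := by
      intro i j h
      by_contra hij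
      exact (hadj i j hij).1 h
    refine clique_conseq (Finset.univ.image v) ⟨?_, ?_⟩
    · intro x hx y hy hxy
      simp only [Finset.coe_image, Finset.coe_univ, Set.image_univ, Set.mem_range] at hx hy
      obtain ⟨i, rfl⟩ := hx
      obtain ⟨j, rfl⟩ := hy
      exact hadj i j (fun h => hxy (by rw [h]))
    · rw [Finset.card_image_of_injective _ hvinj, Finset.card_univ, Fintype.card_fin]
end

section
/- For every graph G=(V,E) with q(G)=q (i.e., admitting an erasure code over an alphabet of size q for the erasure patterns of G), there is a graph homomorphism from G to G_q, and consequently χ(G) ≤ χ(G_q). -/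
lemma balanced_of_bij (q : ℕ) (g : (Fin 2 → Fin q) → Fin q × Fin q)
    (hg : Function.Bijective g) : BalancedVec q (fun m => (g m).1) := by
  intro j
  have e2 : {p : Fin q × Fin q // p.1 = j} ≃ Fin q :=
    { toFun := fun p => p.1.2
      invFun := fun b => ⟨(j, b), rfl⟩
      left_inv := by
        rintro ⟨⟨a, b⟩, h⟩
        simp only at h
        subst h
        rfl
      right_inv := fun b => rfl }
  have e : {m : Fin 2 → Fin q // (g m).1 = j} ≃ Fin q :=
    ((Equiv.ofBijective g hg).subtypeEquiv (fun m => Iff.rfl)).trans e2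
  calc (Finset.univ.filter fun m => (g m).1 = j).card
      = Fintype.card {m : Fin 2 → Fin q // (g m).1 = j} := (Fintype.card_subtype _).symm
    _ = Fintype.card (Fin q) := Fintype.card_congr e
    _ = q := Fintype.card_fin q

/-- If a graph G admits an erasure code over an alphabet of size q (q ≥ 2),
i.e. an encoding whose pair of coordinate functions at every edge is a bijection of [q]²,
then there is a graph homomorphism G → G_q, and consequently χ(G) ≤ χ(G_q). -/
theorem stmt11 (q : ℕ) (hq : 2 ≤ q) {V : Type} [Fintype V] (G : SimpleGraph V)
    (C : (Fin 2 → Fin q) → V → Fin q)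
    (hC : ∀ u v : V, G.Adj u v →
      Function.Bijective (fun m : Fin 2 → Fin q => (C m u, C m v))) :
    Nonempty (G →g Gq q) ∧ G.chromaticNumber ≤ (Gq q).chromaticNumber := by
  classical
  have hdef : BalancedVec q (fun m : Fin 2 → Fin q => m 0) :=
    balanced_of_bij q (piFinTwoEquiv (fun _ => Fin q)) (piFinTwoEquiv _).bijective
  have key : ∀ v : V, (∃ w, G.Adj v w) → BalancedVec q (fun m => C m v) := by
    rintro v ⟨w, hw⟩
    exact balanced_of_bij q _ (hC v w hw)
  set f : V → {u : (Fin 2 → Fin q) → Fin q // BalancedVec q u} :=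
    fun v => if h : ∃ w, G.Adj v w then ⟨fun m => C m v, key v h⟩
      else ⟨fun m => m 0, hdef⟩ with hf
  have hfval : ∀ u v : V, G.Adj u v → (f u).val = fun m => C m u := by
    intro u v h
    simp only [hf, dif_pos (⟨v, h⟩ : ∃ w, G.Adj u w)]
  have hhom : ∀ u v : V, G.Adj u v → (Gq q).Adj (f u) (f v) := by
    intro u v h
    have h1 : (f u).val = fun m => C m u := hfval u v h
    have h2 : (f v).val = fun m => C m v := hfval v u h.symm
    constructor
    · intro heq
      have hvals : (fun m => C m u) = fun m => C m v := by
        rw [← h1, ← h2, heq]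
      obtain ⟨m, hm⟩ := (hC u v h).2 (⟨0, by omega⟩, ⟨1, by omega⟩)
      have : C m u = C m v := congrFun hvals m
      rw [Prod.ext_iff] at hm
      simp only at hm
      rw [hm.1, hm.2] at this
      exact absurd (Fin.val_eq_val _ _ |>.2 this) (by simp)
    · rw [h1, h2]
      exact (hC u v h).2
  refine ⟨⟨⟨f, fun {u v} h => hhom u v h⟩⟩, ?_⟩
  apply SimpleGraph.chromaticNumber_le_of_forall_imp
  rintro n ⟨c⟩
  exact ⟨c.comp ⟨f, fun {u v} h => hhom u v h⟩⟩
end
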